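/- Let f be an H-invariant continuous function on ℝ^n where H is a closed subgroup of SL_n(ℝ) with H·π(e) compact in SL_n(ℝ)/SL_n(ℤ). Suppose for every w with f(w) ≠ 0 there exist k > 1 and t ∈ H with (1/k)|f(w)|^{1/n} ≤ ‖tw‖ ≤ k|f(w)|^{1/n} (k independent of w). Then f(ℤ^n) is discrete in ℝ. -/

import Mathlib

open Matrix Set MulAction

/-- Topology on `SL_n(ℝ)` induced from the space of matrices. -/
instance SLtop (n : ℕ) : TopologicalSpace (Matrix.SpecialLinearGroup (Fin n) ℝ) :=
  instTopologicalSpaceSubtype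

instance MatLC (n : ℕ) : LocallyCompactSpace (Matrix (Fin n) (Fin n) ℝ) :=
  inferInstanceAs (LocallyCompactSpace (Fin n → Fin n → ℝ))

instance MatSC (n : ℕ) : SecondCountableTopology (Matrix (Fin n) (Fin n) ℝ) :=
  inferInstanceAs (SecondCountableTopology (Fin n → Fin n → ℝ))

instance SLtopgrp (n : ℕ) : IsTopologicalGroup (Matrix.SpecialLinearGroup (Fin n) ℝ) where
  continuous_mul := by
    apply continuous_induced_rng.2
    show Continuous fun p : Matrix.SpecialLinearGroup (Fin n) ℝ ×
        Matrix.SpecialLinearGroup (Fin n) ℝ =>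
        ((p.1 : Matrix (Fin n) (Fin n) ℝ) * (p.2 : Matrix (Fin n) (Fin n) ℝ))
    exact ((continuous_subtype_val.comp continuous_fst)).matrix_mul
      ((continuous_subtype_val.comp continuous_snd))
  continuous_inv := by
    apply continuous_induced_rng.2
    show Continuous fun A : Matrix.SpecialLinearGroup (Fin n) ℝ =>
        Matrix.adjugate (A : Matrix (Fin n) (Fin n) ℝ)
    exact continuous_subtype_val.matrix_adjugate

instance SLlc (n : ℕ) : LocallyCompactSpace (Matrix.SpecialLinearGroup (Fin n) ℝ) := by
  have h : IsClosed {A : Matrix (Fin n) (Fin n) ℝ | A.det = 1} :=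
    isClosed_eq continuous_id.matrix_det continuous_const
  exact h.locallyCompactSpace

instance SLsc (n : ℕ) : SecondCountableTopology (Matrix.SpecialLinearGroup (Fin n) ℝ) :=
  Topology.IsEmbedding.subtypeVal.secondCountableTopology

/-- Any element of a closed subgroup `H` with compact image in `G ⧸ Γ` can be written
as `τ * δ` with `τ` in a fixed compact set and `δ ∈ Γ ∩ H`. -/
theorem compactDecomp {G : Type*} [TopologicalSpace G] [Group G] [IsTopologicalGroup G]
    [LocallyCompactSpace G] [SecondCountableTopology G] (Γ H : Subgroup G)
    (hΓ : IsClosed (Γ : Set G)) (hH : IsClosed (H : Set G))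
    (horb : IsCompact ((QuotientGroup.mk : G → G ⧸ Γ) '' (H : Set G))) :
    ∃ K : Set G, IsCompact K ∧ ∀ t ∈ H, ∃ τ ∈ K, ∃ δ : G, δ ∈ Γ ∧ δ ∈ H ∧ t = τ * δ := by
  have hT2 : T2Space (G ⧸ Γ) := by
    rw [t2_iff_isClosed_diagonal]
    have hq : IsOpenQuotientMap (fun p : G × G => ((p.1 : G ⧸ Γ), (p.2 : G ⧸ Γ))) :=
      (QuotientGroup.isOpenQuotientMap_mk).prodMap (QuotientGroup.isOpenQuotientMap_mk)
    rw [← hq.isQuotientMap.isClosed_preimage]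
    have : (fun p : G × G => ((p.1 : G ⧸ Γ), (p.2 : G ⧸ Γ))) ⁻¹' (Set.diagonal (G ⧸ Γ))
        = {p : G × G | p.1⁻¹ * p.2 ∈ Γ} := by
      ext p
      simp [Set.mem_diagonal_iff, QuotientGroup.eq]
    rw [this]
    exact hΓ.preimage (by continuity)
  have hHlc : LocallyCompactSpace H := hH.locallyCompactSpace
  have hHsc : SecondCountableTopology H := Topology.IsEmbedding.subtypeVal.secondCountableTopology
  have hHsig : SigmaCompactSpace H := inferInstance
  set x₀ : G ⧸ Γ := ((1 : G) : G ⧸ Γ) with hx₀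
  have horbeq : (orbit H x₀ : Set (G ⧸ Γ)) = (QuotientGroup.mk : G → G ⧸ Γ) '' (H : Set G) := by
    ext y
    constructor
    · rintro ⟨⟨h, hh⟩, rfl⟩
      refine ⟨h, hh, ?_⟩
      show (h : G ⧸ Γ) = ((h * 1 : G) : G ⧸ Γ)
      rw [mul_one]
    · rintro ⟨h, hh, rfl⟩
      refine ⟨⟨h, hh⟩, ?_⟩
      show ((h * 1 : G) : G ⧸ Γ) = (h : G ⧸ Γ)
      rw [mul_one]
  have horbcpt : IsCompact (orbit H x₀ : Set (G ⧸ Γ)) := horbeq ▸ horb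
  have : CompactSpace (orbit H x₀) := isCompact_iff_compactSpace.mp horbcpt
  have hcsmul : ContinuousSMul H (orbit H x₀) := by
    constructor
    rw [Topology.IsEmbedding.subtypeVal.continuous_iff]
    have : (Subtype.val ∘ fun p : H × (orbit H x₀) => p.1 • p.2)
        = fun p : H × (orbit H x₀) => p.1 • (p.2 : G ⧸ Γ) := rfl
    rw [this]
    exact (continuous_smul (M := G) (X := G ⧸ Γ)).comp ((continuous_subtype_val.comp continuous_fst).prodMk (continuous_subtype_val.comp continuous_snd))
  have hBaire : BaireSpace (orbit H x₀) := inferInstance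
  set b : orbit H x₀ := ⟨x₀, mem_orbit_self x₀⟩ with hb
  have hopen : IsOpenMap (fun h : H => h • b) := isOpenMap_smul_of_sigmaCompact b
  have hcov : ∀ h : H, ∃ V : Set H, IsCompact V ∧ V ∈ nhds h :=
    fun h => exists_compact_mem_nhds h
  choose V hVc hVn using hcov
  have hcover : (Set.univ : Set (orbit H x₀)) ⊆
      ⋃ h : H, (fun g : H => g • b) '' interior (V h) := by
    intro y _
    obtain ⟨h, rfl⟩ : ∃ h : H, h • b = y := by
      obtain ⟨h, hy⟩ := exists_smul_eq H b y
      exact ⟨h, hy⟩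
    exact Set.mem_iUnion.2 ⟨h, ⟨h, mem_interior_iff_mem_nhds.2 (hVn h), rfl⟩⟩
  obtain ⟨s, hs⟩ := isCompact_univ.elim_finite_subcover
    (fun h : H => (fun g : H => g • b) '' interior (V h))
    (fun h => hopen _ isOpen_interior) hcover
  refine ⟨⋃ h ∈ s, Subtype.val '' V h, ?_, ?_⟩
  · exact s.isCompact_biUnion (fun h _ => ((hVc h).image continuous_subtype_val))
  · intro t ht
    have hmem : (⟨t, ht⟩ : H) • b ∈ ⋃ h ∈ s, (fun g : H => g • b) '' interior (V h) :=
      hs (Set.mem_univ _)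
    rw [Set.mem_iUnion₂] at hmem
    obtain ⟨h, hhs, τ, hτ, hτb⟩ := hmem
    have hQ : ((τ : G) : G ⧸ Γ) = ((t : G) : G ⧸ Γ) := by
      have h2 := congrArg (Subtype.val) hτb
      have h3 : (τ : G) • x₀ = (t : G) • x₀ := h2
      simpa [x₀, smul_eq_mul] using h3
    have hδΓ : (τ : G)⁻¹ * t ∈ Γ := QuotientGroup.eq.mp hQ
    refine ⟨(τ : G), Set.mem_biUnion hhs ⟨τ, interior_subset hτ, rfl⟩,
      (τ : G)⁻¹ * t, hδΓ, mul_mem (inv_mem τ.2) ht, by group⟩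

/-- `SL_n(ℤ)`, viewed inside `SL_n(ℝ)`, is a closed subgroup. -/
theorem gammaClosed (n : ℕ) (Γ : Subgroup (Matrix.SpecialLinearGroup (Fin n) ℝ))
    (hΓ : Γ = (Matrix.SpecialLinearGroup.map (Int.castRingHom ℝ)).range) :
    IsClosed (Γ : Set (Matrix.SpecialLinearGroup (Fin n) ℝ)) := by
  have hset : (Γ : Set (Matrix.SpecialLinearGroup (Fin n) ℝ)) =
      (fun g : Matrix.SpecialLinearGroup (Fin n) ℝ => (g : Matrix (Fin n) (Fin n) ℝ)) ⁻¹'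
      {A : Matrix (Fin n) (Fin n) ℝ | ∀ i j, A i j ∈ Set.range ((↑) : ℤ → ℝ)} := by
    ext g
    simp only [hΓ, SetLike.mem_coe, MonoidHom.mem_range, Set.mem_preimage, Set.mem_setOf_eq]
    constructor
    · rintro ⟨B, rfl⟩ i j
      exact ⟨(B : Matrix (Fin n) (Fin n) ℤ) i j, rfl⟩
    · intro hij
      choose m hm using hij
      have hmap : ((Matrix.of m).map ((Int.castRingHom ℝ) : ℤ →+* ℝ)) =
          (g : Matrix (Fin n) (Fin n) ℝ) := by
        ext i j
        simpa using hm i j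
      have hdet : (Matrix.of m).det = 1 := by
        have h2 : ((Matrix.of m).det : ℝ) = 1 := by
          calc ((Matrix.of m).det : ℝ)
              = ((Matrix.of m).map ((Int.castRingHom ℝ) : ℤ →+* ℝ)).det := by
                rw [← RingHom.mapMatrix_apply, ← RingHom.map_det]; rfl
            _ = (g : Matrix (Fin n) (Fin n) ℝ).det := by rw [hmap]
            _ = 1 := g.2
        exact_mod_cast h2
      refine ⟨⟨Matrix.of m, hdet⟩, ?_⟩
      apply Subtype.ext
      exact hmap
  rw [hset]
  apply IsClosed.preimage continuous_subtype_val
  have hcl : IsClosed (Set.range ((↑) : ℤ → ℝ)) := Int.isClosedEmbedding_coe_real.isClosed_range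
  have heq : {A : Matrix (Fin n) (Fin n) ℝ | ∀ i j, A i j ∈ Set.range ((↑) : ℤ → ℝ)} =
      ⋂ i, ⋂ j, (fun A : Matrix (Fin n) (Fin n) ℝ => A i j) ⁻¹' Set.range ((↑) : ℤ → ℝ) := by
    ext A; simp [Set.mem_iInter]
  rw [heq]
  exact isClosed_iInter fun i => isClosed_iInter fun j =>
    hcl.preimage (continuous_id.matrix_elem i j)

theorem intVecFinite (n : ℕ) (R : ℝ) :
    {z : Fin n → ℤ | ‖(fun i => (z i : ℝ))‖ ≤ R}.Finite := by
  apply Set.Finite.subset (Set.Finite.pi (fun i : Fin n => Set.finite_Icc (-⌈R⌉) ⌈R⌉))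
  intro z hz
  simp only [Set.mem_pi, Set.mem_univ, Set.mem_Icc, forall_true_left]
  intro i
  have h1 : |(z i : ℝ)| ≤ R := by
    have := norm_le_pi_norm (fun i => (z i : ℝ)) i
    simpa [Real.norm_eq_abs] using this.trans hz
  have h2 : (|z i| : ℝ) ≤ (⌈R⌉ : ℝ) := by
    exact_mod_cast h1.trans (Int.le_ceil R)
  have h3 : |z i| ≤ ⌈R⌉ := by exact_mod_cast h2
  exact abs_le.mp h3

theorem castMulVec (n : ℕ) (B : Matrix (Fin n) (Fin n) ℤ) (z : Fin n → ℤ) :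
    (fun i => ((B.mulVec z) i : ℝ)) =
      (B.map ((↑) : ℤ → ℝ)).mulVec (fun i => (z i : ℝ)) := by
  funext i
  simp [Matrix.mulVec, dotProduct, Matrix.map_apply]

theorem discreteOfSep (S : Set ℝ)
    (h : ∀ y ∈ S, ∃ ε > 0, ∀ x ∈ S, |x - y| < ε → x = y) : DiscreteTopology S := by
  rw [discreteTopology_subtype_iff]
  intro y hy
  obtain ⟨ε, hε, hsep⟩ := h y hy
  rw [Filter.empty_mem_iff_bot.symm]
  have h1 : Metric.ball y ε \ {y} ∈ nhdsWithin y {y}ᶜ :=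
    diff_mem_nhdsWithin_compl (Metric.ball_mem_nhds y hε) {y}
  have h2 : (Metric.ball y ε \ {y}) ∩ S ∈ nhdsWithin y {y}ᶜ ⊓ Filter.principal S :=
    Filter.inter_mem_inf h1 (Filter.mem_principal_self S)
  convert h2 using 1
  symm
  rw [Set.eq_empty_iff_forall_notMem]
  rintro x ⟨⟨hball, hne⟩, hxS⟩
  exact hne (hsep x hxS (by simpa [Real.dist_eq] using hball))

/-- Discreteness part of Proposition 4.1: if `f` is an `H`-invariant continuous
function, `H·π(e)` is compact, and every `w` with `f(w) ≠ 0` can be moved by `H`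
to a vector of norm comparable to `|f(w)|^{1/n}` (uniformly in `w`), then
`f(ℤ^n)` is discrete in `ℝ`. -/
theorem stmt13 (n : ℕ) (f : (Fin n → ℝ) → ℝ) (hfc : Continuous f)
    (Γ H : Subgroup (Matrix.SpecialLinearGroup (Fin n) ℝ))
    (hΓ : Γ = (Matrix.SpecialLinearGroup.map (Int.castRingHom ℝ)).range)
    (hH : IsClosed (H : Set (Matrix.SpecialLinearGroup (Fin n) ℝ)))
    (hinv : ∀ h ∈ H, ∀ x : Fin n → ℝ,
      f (Matrix.mulVec (h : Matrix (Fin n) (Fin n) ℝ) x) = f x)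
    (horb : IsCompact ((QuotientGroup.mk : Matrix.SpecialLinearGroup (Fin n) ℝ →
      Matrix.SpecialLinearGroup (Fin n) ℝ ⧸ Γ) '' (H : Set _)))
    (hcomp : ∃ k : ℝ, 1 < k ∧ ∀ w : Fin n → ℝ, f w ≠ 0 → ∃ t ∈ H,
      (1 / k) * |f w| ^ ((n : ℝ)⁻¹) ≤
        ‖Matrix.mulVec (t : Matrix (Fin n) (Fin n) ℝ) w‖ ∧
      ‖Matrix.mulVec (t : Matrix (Fin n) (Fin n) ℝ) w‖ ≤ k * |f w| ^ ((n : ℝ)⁻¹)) :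
    DiscreteTopology {y : ℝ | ∃ z : Fin n → ℤ, f (fun i => (z i : ℝ)) = y} := by
  classical
  obtain ⟨k, hk1, hcomp⟩ := hcomp
  have hk0 : (0 : ℝ) ≤ k := le_of_lt (lt_trans one_pos hk1)
  obtain ⟨K, hKc, hKdec⟩ := compactDecomp Γ H (gammaClosed n Γ hΓ) hH horb
  apply discreteOfSep
  rintro y hy
  -- bounds
  set B : ℝ := |y| + 1 with hBdef
  have hB0 : (0 : ℝ) ≤ B := by positivity
  set M : ℝ := k * B ^ ((n : ℝ)⁻¹) with hMdef
  -- uniform bound for `τ⁻¹ •` over the compact set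
  set φ : Matrix.SpecialLinearGroup (Fin n) ℝ × (Fin n → ℝ) → ℝ :=
    fun p => ‖Matrix.mulVec ((p.1⁻¹ : Matrix.SpecialLinearGroup (Fin n) ℝ) :
      Matrix (Fin n) (Fin n) ℝ) p.2‖ with hφdef
  have hφc : Continuous φ := by
    have h1 : Continuous (fun p : Matrix.SpecialLinearGroup (Fin n) ℝ × (Fin n → ℝ) =>
        (p.1⁻¹ : Matrix.SpecialLinearGroup (Fin n) ℝ)) :=
      continuous_inv.comp continuous_fst
    have h2 : Continuous (fun p : Matrix.SpecialLinearGroup (Fin n) ℝ × (Fin n → ℝ) =>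
        ((p.1⁻¹ : Matrix.SpecialLinearGroup (Fin n) ℝ) : Matrix (Fin n) (Fin n) ℝ)) :=
      continuous_subtype_val.comp h1
    exact (h2.matrix_mulVec continuous_snd).norm
  have hKM : IsCompact (K ×ˢ Metric.closedBall (0 : Fin n → ℝ) M) :=
    hKc.prod (isCompact_closedBall _ _)
  obtain ⟨C, hC⟩ : ∃ C : ℝ, ∀ p ∈ K ×ˢ Metric.closedBall (0 : Fin n → ℝ) M, φ p ≤ C := by
    obtain ⟨C, hC⟩ := (hKM.image hφc).bddAbove
    exact ⟨C, fun p hp => hC (Set.mem_image_of_mem φ hp)⟩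
  -- the finite set of candidate values
  set F : Set ℝ :=
    ((fun z : Fin n → ℤ => f (fun i => (z i : ℝ))) ''
      {z : Fin n → ℤ | ‖(fun i => (z i : ℝ))‖ ≤ C}) ∪ {0} with hFdef
  have hF : F.Finite := ((intVecFinite n C).image _).union (Set.finite_singleton 0)
  -- every value of `f` on `ℤ^n` close to `y` lies in `F`
  have hclaim : ∀ x ∈ {y : ℝ | ∃ z : Fin n → ℤ, f (fun i => (z i : ℝ)) = y},
      |x - y| < 1 → x ∈ F := by
    rintro x ⟨z, rfl⟩ hxy
    by_cases h0 : f (fun i => (z i : ℝ)) = 0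
    · exact Or.inr (by simp [h0])
    · obtain ⟨t, htH, _, hup⟩ := hcomp _ h0
      have habs : |f (fun i => (z i : ℝ))| ≤ B := by
        calc |f (fun i => (z i : ℝ))| = |(f (fun i => (z i : ℝ)) - y) + y| := by ring_nf
          _ ≤ |f (fun i => (z i : ℝ)) - y| + |y| := abs_add_le _ _
          _ ≤ 1 + |y| := by nlinarith [hxy]
          _ = B := by rw [hBdef]; ring
      have hupM : ‖Matrix.mulVec (t : Matrix (Fin n) (Fin n) ℝ) (fun i => (z i : ℝ))‖ ≤ M := by
        refine hup.trans ?_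
        rw [hMdef]
        refine mul_le_mul_of_nonneg_left ?_ hk0
        exact Real.rpow_le_rpow (abs_nonneg _) habs (by positivity)
      obtain ⟨τ, hτK, δ, hδΓ, hδH, htdec⟩ := hKdec t htH
      have hδeq : δ = τ⁻¹ * t := by rw [htdec]; group
      -- integer matrix representing δ
      rw [hΓ] at hδΓ
      obtain ⟨D, hD⟩ := hδΓ
      set z' : Fin n → ℤ := Matrix.mulVec (D : Matrix (Fin n) (Fin n) ℤ) z with hz'def
      have hcast : (fun i => (z' i : ℝ)) =
          Matrix.mulVec ((δ : Matrix.SpecialLinearGroup (Fin n) ℝ) :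
            Matrix (Fin n) (Fin n) ℝ) (fun i => (z i : ℝ)) := by
        rw [hz'def, castMulVec]
        congr 1
        rw [← hD]
        rfl
      have hnorm : ‖(fun i => (z' i : ℝ))‖ ≤ C := by
        have hδmat : ((δ : Matrix.SpecialLinearGroup (Fin n) ℝ) : Matrix (Fin n) (Fin n) ℝ) =
            ((τ⁻¹ : Matrix.SpecialLinearGroup (Fin n) ℝ) : Matrix (Fin n) (Fin n) ℝ) *
            ((t : Matrix.SpecialLinearGroup (Fin n) ℝ) : Matrix (Fin n) (Fin n) ℝ) := by
          rw [hδeq]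
          exact Matrix.SpecialLinearGroup.coe_mul _ _
        rw [hcast, hδmat, ← Matrix.mulVec_mulVec]
        exact hC (τ, Matrix.mulVec ((t : Matrix.SpecialLinearGroup (Fin n) ℝ) :
            Matrix (Fin n) (Fin n) ℝ) (fun i => (z i : ℝ)))
          ⟨hτK, Metric.mem_closedBall.2 (by simpa [dist_eq_norm] using hupM)⟩
      refine Or.inl ⟨z', hnorm, ?_⟩
      show f (fun i => (z' i : ℝ)) = f (fun i => (z i : ℝ))
      rw [hcast]
      exact hinv δ hδH _
  -- extract a positive separation radius from finiteness of `F`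
  have hyT : y ∉ F \ {y} := fun h => h.2 rfl
  obtain ⟨ε, hε0, hball⟩ := Metric.isOpen_iff.mp (hF.diff (t := {y})).isClosed.isOpen_compl y hyT
  refine ⟨min ε 1, lt_min hε0 one_pos, fun x hxS hxd => ?_⟩
  by_contra hne
  have hx1 : |x - y| < 1 := lt_of_lt_of_le hxd (min_le_right _ _)
  have hxF : x ∈ F := hclaim x hxS hx1
  have hxT : x ∈ F \ {y} := ⟨hxF, by simpa using hne⟩
  have : x ∈ (F \ {y})ᶜ := hball (by simpa [Real.dist_eq] using lt_of_lt_of_le hxd (min_le_left _ _))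
  exact this hxT
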